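/- Let 𝒜 be an associative unital ℝ-algebra, h, α : ℝ, and a, b, c, d ∈ 𝒜 with D := a*d − b*c − h(1+α)•(a*c). Assume the Fun_{h,α}(GL(2)) relations: a*b − b*a = h(1+α)•(a*a − D); a*c − c*a = −h(1−α)•(c*c); b*d − d*b = −h(1−α)•(d*d − D); c*d − d*c = h(1+α)•(c*c); a*d − d*a = h(1+α)•(a*c) − h(1−α)•(d*c); b*c − c*b = −h(1+α)•(a*c) − h(1−α)•(c*d); together with the determinant relations a*D − D*a = 2hα•(c*D), b*D − D*b = 2hα•(D*d − a*D), c*D = D*c, d*D − D*d = −2hα•(c*D). Set a' := d, b' := b, c' := c, d' := a, and D' := a'*d' − b'*c' − h(1−α)•(a'*c'). Then D' = D, and (a', b', c', d') satisfy the Fun_{h,−α}(GL(2)) relations, i.e. all of the above relations with α replaced by −α and (a,b,c,d,D) replaced by (a',b',c',d',D'). -/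
import Mathlib


/-- The map `ρ(a) = d, ρ(b) = b, ρ(c) = c, ρ(d) = a` is an automorphism of the defining
relations of the Jordanian quantum group `Fun_{h,α}(GL(2))`, provided the deformation
parameters are redefined by `h → h`, `α → −α`; moreover it preserves the quantum
determinant. -/
theorem Fun_h_alpha_automorphism {A : Type*} [Ring A] [Algebra ℝ A] (h α : ℝ)
    (a b c d D : A) (hD : D = a * d - b * c - (h * (1 + α)) • (a * c))
    (hab : a * b - b * a = (h * (1 + α)) • (a * a - D))
    (hac : a * c - c * a = (-(h * (1 - α))) • (c * c))
    (hbd : b * d - d * b = (-(h * (1 - α))) • (d * d - D))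
    (hcd : c * d - d * c = (h * (1 + α)) • (c * c))
    (had : a * d - d * a = (h * (1 + α)) • (a * c) - (h * (1 - α)) • (d * c))
    (hbc : b * c - c * b = (-(h * (1 + α))) • (a * c) - (h * (1 - α)) • (c * d))
    (haD : a * D - D * a = (2 * h * α) • (c * D))
    (hbD : b * D - D * b = (2 * h * α) • (D * d - a * D))
    (hcD : c * D = D * c)
    (hdD : d * D - D * d = (-(2 * h * α)) • (c * D))
    (a' b' c' d' D' : A)
    (ha' : a' = d) (hb' : b' = b) (hc' : c' = c) (hd' : d' = a)
    (hD' : D' = a' * d' - b' * c' - (h * (1 - α)) • (a' * c')) :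
    D' = D ∧
    a' * b' - b' * a' = (h * (1 + -α)) • (a' * a' - D') ∧
    a' * c' - c' * a' = (-(h * (1 - -α))) • (c' * c') ∧
    b' * d' - d' * b' = (-(h * (1 - -α))) • (d' * d' - D') ∧
    c' * d' - d' * c' = (h * (1 + -α)) • (c' * c') ∧
    a' * d' - d' * a' = (h * (1 + -α)) • (a' * c') - (h * (1 - -α)) • (d' * c') ∧
    b' * c' - c' * b' = (-(h * (1 + -α))) • (a' * c') - (h * (1 - -α)) • (c' * d') ∧
    a' * D' - D' * a' = (2 * h * -α) • (c' * D') ∧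
    b' * D' - D' * b' = (2 * h * -α) • (D' * d' - a' * D') ∧
    c' * D' = D' * c' ∧
    d' * D' - D' * d' = (-(2 * h * -α)) • (c' * D') := by

  subst ha' hb' hc' hd'
  have hDD : D' = D := by
    rw [hD', hD]; linear_combination (norm := module) -had
  subst hDD
  refine ⟨rfl, ?_, ?_, ?_, ?_, ?_, ?_, ?_, ?_, ?_, ?_⟩
  · linear_combination (norm := module) -hbd
  · linear_combination (norm := module) -hcd
  · linear_combination (norm := module) -hab
  · linear_combination (norm := module) -hac
  · linear_combination (norm := module) -had
  · linear_combination (norm := module) hbc - (h * (1 + α)) • hac - (h * (1 - α)) • hcd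
  · linear_combination (norm := module) hdD
  · linear_combination (norm := module) hbD - (2 * h * α) • hdD - (2 * h * α) • haD
  · exact hcD
  · linear_combination (norm := module) haD
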